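/- Let (V, K, q) be an anisotropic quadratic space with basepoint ε, and let (Ṽ, K̃, q̃) be an anisotropic quadratic space with basepoint ε̃ whose polar form f̃ is not identically zero and with dim_{K̃} Ṽ ≥ 3. Let γ : V → Ṽ be an additive bijection with γ(ε) = ε̃ such that γ(h_a(x)) = h̃_{γ(a)}(γ(x)) for all a ∈ V with a ≠ 0 and all x ∈ V, where h and h̃ denote the Hua maps of the two spaces. Then there exists a field isomorphism φ : K → K̃ such that γ(s • x) = φ(s) • γ(x) and q̃(γ(x)) = φ(q(x)) for all x ∈ V and s ∈ K; i.e., (γ, φ) is an isomorphism of quadratic spaces. -/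

import Mathlib

/-- The polar form of a quadratic map. -/
def polarForm {K V : Type*} [Field K] [AddCommGroup V] (q : V → K) (x y : V) : K :=
  q (x + y) - q x - q y

/-- The Hua map `h_a (x) = f(a, σ x) • a - q a • σ x` of the Moufang set of quadratic
form type, where `σ x = f(ε, x) • ε - x`. -/
def huaMap {K V : Type*} [Field K] [AddCommGroup V] [Module K V] (q : V → K) (ε : V)
    (a x : V) : V :=
  polarForm q a (polarForm q ε x • ε - x) • a - q a • (polarForm q ε x • ε - x)

structure QS (K V : Type*) [Field K] [AddCommGroup V] [Module K V] where
  q : V → K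
  ε : V
  hqsmul : ∀ (s : K) (x : V), q (s • x) = s ^ 2 * q x
  hpaddl : ∀ x x' y : V, polarForm q (x + x') y = polarForm q x y + polarForm q x' y
  hpsmull : ∀ (s : K) (x y : V), polarForm q (s • x) y = s * polarForm q x y
  hpaddr : ∀ x y y' : V, polarForm q x (y + y') = polarForm q x y + polarForm q x y'
  hpsmulr : ∀ (s : K) (x y : V), polarForm q x (s • y) = s * polarForm q x y
  haniso : ∀ x : V, q x = 0 ↔ x = 0
  hε : q ε = 1

namespace QS
variable {K V : Type*} [Field K] [AddCommGroup V] [Module K V] (S : QS K V)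

/-- polar form -/
def f (x y : V) : K := polarForm S.q x y

lemma faddl (x x' y : V) : S.f (x + x') y = S.f x y + S.f x' y := S.hpaddl x x' y
lemma fsmull (s : K) (x y : V) : S.f (s • x) y = s * S.f x y := S.hpsmull s x y
lemma faddr (x y y' : V) : S.f x (y + y') = S.f x y + S.f x y' := S.hpaddr x y y'
lemma fsmulr (s : K) (x y : V) : S.f x (s • y) = s * S.f x y := S.hpsmulr s x y

lemma fsymm (x y : V) : S.f x y = S.f y x := by
  unfold f polarForm; rw [add_comm]; ring

lemma q0 : S.q 0 = 0 := by
  have := S.hqsmul 0 0; simpa using this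

lemma qneg (x : V) : S.q (-x) = S.q x := by
  have := S.hqsmul (-1) x; simpa using this

lemma fzero_l (y : V) : S.f 0 y = 0 := by
  have := S.fsmull 0 y y; simpa using this

lemma fzero_r (y : V) : S.f y 0 = 0 := by rw [fsymm]; exact S.fzero_l y

lemma fnegr (x y : V) : S.f x (-y) = - S.f x y := by
  have := S.fsmulr (-1) x y; simpa using this

lemma fnegl (x y : V) : S.f (-x) y = - S.f x y := by
  rw [fsymm, fnegr, fsymm]

lemma fsubr (x y z : V) : S.f x (y - z) = S.f x y - S.f x z := by
  rw [sub_eq_add_neg, faddr, fnegr, sub_eq_add_neg]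

lemma fsubl (x y z : V) : S.f (x - y) z = S.f x z - S.f y z := by
  rw [sub_eq_add_neg, faddl, fnegl, sub_eq_add_neg]

lemma fself (x : V) : S.f x x = 2 * S.q x := by
  unfold f polarForm
  rw [show x + x = (2:K) • x from (two_smul K x).symm, S.hqsmul]; ring

lemma qadd (x y : V) : S.q (x + y) = S.q x + S.q y + S.f x y := by
  unfold f polarForm; ring

lemma qsub (x y : V) : S.q (x - y) = S.q x + S.q y - S.f x y := by
  rw [sub_eq_add_neg, qadd, qneg, fnegr]; ring

/-- trace -/
def T (x : V) : K := S.f S.ε x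

lemma Tadd (x y : V) : S.T (x + y) = S.T x + S.T y := S.faddr _ _ _
lemma Tsmul (s : K) (x : V) : S.T (s • x) = s * S.T x := S.fsmulr _ _ _
lemma Tsub (x y : V) : S.T (x - y) = S.T x - S.T y := S.fsubr _ _ _

lemma Tε : S.T S.ε = 2 := by
  unfold T; rw [fself, S.hε]; ring

/-- the standard involution -/
def σ (x : V) : V := S.T x • S.ε - x

lemma σadd (x y : V) : S.σ (x + y) = S.σ x + S.σ y := by
  unfold σ; rw [Tadd, add_smul]; abel

lemma σsmul (s : K) (x : V) : S.σ (s • x) = s • S.σ x := by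
  unfold σ; rw [Tsmul, mul_smul, smul_sub]

lemma σzero : S.σ 0 = 0 := by
  have := S.σsmul 0 0; simpa using this

lemma σneg (x : V) : S.σ (-x) = - S.σ x := by
  have := S.σsmul (-1) x; simpa using this

lemma σsub (x y : V) : S.σ (x - y) = S.σ x - S.σ y := by
  rw [sub_eq_add_neg, σadd, σneg, sub_eq_add_neg]

lemma σε : S.σ S.ε = S.ε := by
  unfold σ; rw [Tε, two_smul]; abel

lemma Tσ (x : V) : S.T (S.σ x) = S.T x := by
  unfold σ
  rw [Tsub, Tsmul, Tε]; ring

lemma σσ (x : V) : S.σ (S.σ x) = x := by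
  conv_lhs => rw [σ, Tσ]
  unfold σ; abel

lemma fεx (x : V) : S.f x S.ε = S.T x := S.fsymm x S.ε

lemma qσ (x : V) : S.q (S.σ x) = S.q x := by
  unfold σ
  rw [qsub, S.hqsmul, S.hε, fsmull]
  have h : S.f S.ε x = S.T x := rfl
  rw [h]; ring

/-- the Hua map / U-operator -/
def U (a x : V) : V := huaMap S.q S.ε a x

lemma U_def (a x : V) : S.U a x = S.f a (S.σ x) • a - S.q a • S.σ x := rfl

lemma U_add (a x y : V) : S.U a (x + y) = S.U a x + S.U a y := by
  rw [U_def, U_def, U_def, σadd, faddr, add_smul, smul_add]; abel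

lemma U_smul (a : V) (s : K) (x : V) : S.U a (s • x) = s • S.U a x := by
  rw [U_def, U_def, σsmul, fsmulr, mul_smul, smul_comm (S.q a) s, smul_sub]

lemma U_zero_left (x : V) : S.U 0 x = 0 := by
  rw [U_def, fzero_l, q0, zero_smul, zero_smul, sub_zero]

lemma U_ε (x : V) : S.U S.ε x = x := by
  rw [U_def, S.hε]
  rw [show S.f S.ε (S.σ x) = S.T x from S.Tσ x]
  unfold σ; rw [one_smul]; abel

lemma εne : S.ε ≠ 0 := by
  intro h
  have h1 := S.hε; rw [h, S.q0] at h1; exact absurd h1 (by norm_num)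

lemma qne {x : V} (hx : x ≠ 0) : S.q x ≠ 0 := fun h => hx ((S.haniso x).mp h)

/-- radical membership -/
def InR (v : V) : Prop := ∀ z : V, S.f z v = 0

lemma InR_add {v w : V} (hv : S.InR v) (hw : S.InR w) : S.InR (v + w) := fun z => by
  rw [faddr, hv z, hw z, add_zero]

lemma InR_smul {v : V} (s : K) (hv : S.InR v) : S.InR (s • v) := fun z => by
  rw [fsmulr, hv z, mul_zero]

lemma InR_neg {v : V} (hv : S.InR v) : S.InR (-v) := fun z => by
  rw [fnegr, hv z, neg_zero]

lemma InR_sub {v w : V} (hv : S.InR v) (hw : S.InR w) : S.InR (v - w) := by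
  rw [sub_eq_add_neg]; exact S.InR_add hv (S.InR_neg hw)

lemma InR_zero : S.InR 0 := fun z => S.fzero_r z

lemma σ_of_InR {v : V} (hv : S.InR v) : S.σ v = -v := by
  unfold σ T
  rw [show S.f S.ε v = 0 from hv S.ε, zero_smul, zero_sub]

/-- the linear functional `f · y` -/
def fL (y : V) : V →ₗ[K] K where
  toFun z := S.f z y
  map_add' a b := S.hpaddl a b y
  map_smul' s a := S.hpsmull s a y

@[simp] lemma fL_apply (y z : V) : S.fL y z = S.f z y := rfl



lemma smul_solve {c d : K} {x y : V} (hc : c ≠ 0) (h : c • x = d • y) :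
    x = (d / c) • y := by
  rw [div_eq_inv_mul, mul_smul, ← h, inv_smul_smul₀ hc]

theorem centroid
    (hproper : ∃ u v : V, S.f u v ≠ 0)
    (h3 : ∀ φ ψ : V →ₗ[K] K, ∃ x : V, x ≠ 0 ∧ φ x = 0 ∧ ψ x = 0)
    (ω : V → V) (hωadd : ∀ x y, ω (x + y) = ω x + ω y)
    (hcomm : ∀ b x, ω (S.U b x) = S.U b (ω x)) :
    ∃ c : K, ∀ x, ω x = c • x := by
  have hω0 : ω 0 = 0 := by
    have h := hωadd 0 0; rw [add_zero] at h
    have h2 : ω 0 + ω 0 = ω 0 + 0 := by rw [add_zero]; exact h.symm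
    exact (add_left_cancel h2)
  have hωneg : ∀ x, ω (-x) = - ω x := by
    intro x
    have h := hωadd x (-x); rw [add_neg_cancel, hω0] at h
    exact (neg_eq_of_add_eq_zero_right h.symm).symm
  have hωsub : ∀ x y, ω (x - y) = ω x - ω y := by
    intro x y; rw [sub_eq_add_neg, hωadd, hωneg, sub_eq_add_neg]
  -- the conjugated map
  obtain ⟨W, hW⟩ : ∃ W : V → V, ∀ y, W y = S.σ (ω (S.σ y)) := ⟨_, fun _ => rfl⟩
  have hWadd : ∀ x y, W (x + y) = W x + W y := by
    intro x y; rw [hW, hW, hW, S.σadd, hωadd, S.σadd]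
  -- the fundamental commuting relation, in σ-free form
  have hC : ∀ b y, ω (S.f b y • b - S.q b • y) = S.f b (W y) • b - S.q b • W y := by
    intro b y
    have h := hcomm b (S.σ y)
    rw [S.U_def, S.U_def, S.σσ] at h
    rw [h, hW]
  have hC1 : ∀ b y, S.f b y = 0 →
      ω (S.q b • y) = S.q b • W y - S.f b (W y) • b := by
    intro b y h
    have h' := hC b y
    rw [h, zero_smul, zero_sub, hωneg] at h'
    linear_combination (norm := module) -h'
  have hC3 : ∀ b b' y, S.f b y = 0 → S.f b' y = 0 →
      ω (S.f b b' • y) = S.f b b' • W y - S.f b (W y) • b' - S.f b' (W y) • b := by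
    intro b b' y hb hb'
    have h1 := hC1 b y hb
    have h2 := hC1 b' y hb'
    have hbb' : S.f (b + b') y = 0 := by rw [S.faddl, hb, hb', add_zero]
    have h4 := hC1 (b + b') y hbb'
    rw [S.qadd, S.faddl] at h4
    have hsplit : ω ((S.q b + S.q b' + S.f b b') • y)
        = ω (S.q b • y) + ω (S.q b' • y) + ω (S.f b b' • y) := by
      rw [add_smul, add_smul, hωadd, hωadd]
    rw [hsplit, h1, h2] at h4
    linear_combination (norm := module) h4
  have hC4 : ∀ b b' y, S.f b y = 0 → S.f b' y = 0 → S.f b b' = 0 →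
      S.f b (W y) • b' + S.f b' (W y) • b = 0 := by
    intro b b' y hb hb' hbb
    have h := hC3 b b' y hb hb'
    rw [hbb, zero_smul, hω0, zero_smul] at h
    linear_combination (norm := module) h
  -- existence of a vector orthogonal to y and outside a given line
  have hno : ∀ (y z : V), z ≠ 0 → ∃ b₁, S.f b₁ y = 0 ∧ ∀ μ : K, b₁ ≠ μ • z := by
    intro y z hz
    obtain ⟨δ, hδ⟩ : ∃ δ : Module.Dual K V, δ z ≠ 0 := by
      by_contra h; push_neg at h
      exact hz ((Module.forall_dual_apply_eq_zero_iff K z).mp h)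
    obtain ⟨x, hx0, hx1, hx2⟩ := h3 (S.fL y) δ
    refine ⟨x, by simpa using hx1, fun μ hμ => ?_⟩
    rcases eq_or_ne μ 0 with h0 | h0
    · rw [h0, zero_smul] at hμ; exact hx0 hμ
    · rw [hμ, map_smul, smul_eq_mul] at hx2
      exact h0 (by rcases mul_eq_zero.mp hx2 with h | h; exact h; exact absurd h hδ)
  -- Claim D : W preserves orthogonality to y
  have claimD : ∀ y b, S.f b y = 0 → S.f b (W y) = 0 := by
    intro y b hby
    by_cases hy : y = 0
    · have : W y = 0 := by rw [hy, hW, S.σzero, hω0, S.σzero]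
      rw [this]; exact S.fzero_r b
    by_cases h2 : (2 : K) = 0
    · -- characteristic 2
      have hyy : S.f y y = 0 := by rw [S.fself, h2, zero_mul]
      obtain ⟨b₁, hb₁y, hb₁⟩ := hno y y hy
      have h4 := hC4 b₁ y y hb₁y hyy hb₁y
      have hfyW : S.f y (W y) = 0 := by
        by_contra hne
        refine hb₁ (-(S.f b₁ (W y)) / S.f y (W y)) ?_
        have h5 : S.f y (W y) • b₁ = -(S.f b₁ (W y)) • y := by
          linear_combination (norm := module) h4
        exact smul_solve hne h5
      have h5 := hC4 b y y hby hyy hby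
      rw [hfyW, zero_smul, add_zero] at h5
      rcases smul_eq_zero.mp h5 with h | h
      · exact h
      · exact absurd h hy
    · -- characteristic ≠ 2
      by_cases hb0 : b = 0
      · rw [hb0]; exact S.fzero_l _
      have hfbb : S.f b b ≠ 0 := by
        rw [S.fself]; exact mul_ne_zero h2 (S.qne hb0)
      obtain ⟨b'', hb''0, hb''y, hb''b⟩ := h3 (S.fL y) (S.fL b)
      rw [S.fL_apply] at hb''y hb''b
      have h4 := hC4 b b'' y hby hb''y (by rw [S.fsymm]; exact hb''b)
      by_contra hne
      have h5 : S.f b (W y) • b'' = -(S.f b'' (W y)) • b := by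
        linear_combination (norm := module) h4
      have h6 : b'' = (-(S.f b'' (W y)) / S.f b (W y)) • b := smul_solve hne h5
      have h7 : S.f b'' b = (-(S.f b'' (W y)) / S.f b (W y)) * S.f b b := by
        rw [← S.fsmull, ← h6]
      rw [hb''b] at h7
      have h8 : (-(S.f b'' (W y)) / S.f b (W y)) = 0 :=
        by rcases mul_eq_zero.mp h7.symm with h | h; exact h; exact absurd h hfbb
      rw [h8, zero_smul] at h6
      exact hb''0 h6
  -- W preserves the radical
  have hWrad : ∀ y, S.InR y → S.InR (W y) := by
    intro y hy b; exact claimD y b (hy b)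
  -- existence of the local eigenvalue
  have step6 : ∀ y, ¬ S.InR y → ∃ c : K, S.InR (W y - c • y) := by
    intro y hy
    obtain ⟨u₀, hu₀⟩ : ∃ u₀, S.f u₀ y ≠ 0 := by
      by_contra h; push_neg at h; exact hy h
    refine ⟨S.f u₀ (W y) / S.f u₀ y, fun z => ?_⟩
    have hker : S.f (z - (S.f z y / S.f u₀ y) • u₀) y = 0 := by
      rw [S.fsubl, S.fsmull]; field_simp; ring
    have hD := claimD y _ hker
    rw [S.fsubl, S.fsmull] at hD
    rw [S.fsubr, S.fsmulr]
    field_simp at hD ⊢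
    linear_combination hD
  -- uniqueness of the local eigenvalue
  have cuniq : ∀ y (c c' : K), ¬ S.InR y → S.InR (W y - c • y) → S.InR (W y - c' • y) →
      c = c' := by
    intro y c c' hy h1 h2
    obtain ⟨u₀, hu₀⟩ : ∃ u₀, S.f u₀ y ≠ 0 := by
      by_contra h; push_neg at h; exact hy h
    have h3 := S.InR_sub h2 h1
    have he : (W y - c' • y) - (W y - c • y) = (c - c') • y := by module
    rw [he] at h3
    have h4 := h3 u₀
    rw [S.fsmulr] at h4
    rcases mul_eq_zero.mp h4 with h | h
    · exact sub_eq_zero.mp h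
    · exact absurd h hu₀
  -- the pairing lemma: semi-independent vectors have the same eigenvalue
  have pair : ∀ y z (cy cz : K), ¬ S.InR y → ¬ S.InR z →
      S.InR (W y - cy • y) → S.InR (W z - cz • z) →
      (∃ w, S.f w y = 0 ∧ S.f w z ≠ 0) → (∃ w', S.f w' z = 0 ∧ S.f w' y ≠ 0) →
      cy = cz := by
    intro y z cy cz hy hz hcy hcz ⟨w, hwy, hwz⟩ ⟨w', hw'z, hw'y⟩
    have hyz : ¬ S.InR (y + z) := by
      intro h
      have := h w; rw [S.faddr, hwy, zero_add] at this; exact hwz this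
    obtain ⟨c₃, hc₃⟩ := step6 (y + z) hyz
    have hdiff : S.InR ((cy - c₃) • y + (cz - c₃) • z) := by
      have h := S.InR_sub (S.InR_add hcy hcz) hc₃
      have he : (W y - cy • y) + (W z - cz • z) - (W (y + z) - c₃ • (y + z))
          = (c₃ - cy) • y + (c₃ - cz) • z := by
        rw [hWadd]; module
      rw [he] at h
      have h2 := S.InR_neg h
      have he2 : -((c₃ - cy) • y + (c₃ - cz) • z) = (cy - c₃) • y + (cz - c₃) • z := by
        module
      rwa [he2] at h2
    have e1 : cz = c₃ := by
      have h := hdiff w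
      rw [S.faddr, S.fsmulr, S.fsmulr, hwy, mul_zero, zero_add] at h
      rcases mul_eq_zero.mp h with h | h
      · exact sub_eq_zero.mp h
      · exact absurd h hwz
    have e2 : cy = c₃ := by
      have h := hdiff w'
      rw [S.faddr, S.fsmulr, S.fsmulr, hw'z, mul_zero, add_zero] at h
      rcases mul_eq_zero.mp h with h | h
      · exact sub_eq_zero.mp h
      · exact absurd h hw'y
    rw [e1, e2]
  -- proportionality from kernel inclusion
  have L2 : ∀ y z, ¬ S.InR y → (∀ w, S.f w y = 0 → S.f w z = 0) →
      ∃ μ : K, ∀ w, S.f w z = μ * S.f w y := by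
    intro y z hy hdep
    obtain ⟨u₀, hu₀⟩ : ∃ u₀, S.f u₀ y ≠ 0 := by
      by_contra h; push_neg at h; exact hy h
    refine ⟨S.f u₀ z / S.f u₀ y, fun w => ?_⟩
    have hker : S.f (w - (S.f w y / S.f u₀ y) • u₀) y = 0 := by
      rw [S.fsubl, S.fsmull]; field_simp; ring
    have := hdep _ hker
    rw [S.fsubl, S.fsmull] at this
    field_simp at this ⊢
    linear_combination this
  -- existence of a "transversal" direction
  have existsT : ∀ y, ¬ S.InR y →
      ∃ t, ¬ S.InR t ∧ ¬ (∃ μ : K, ∀ w, S.f w t = μ * S.f w y) ∧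
        ¬ (∃ μ : K, ∀ w, S.f w y = μ * S.f w t) := by
    intro y hy
    by_contra hcon
    push_neg at hcon
    -- then every functional is proportional to that of y
    have hall : ∀ t, ∃ μ : K, ∀ w, S.f w t = μ * S.f w y := by
      intro t
      by_cases ht : S.InR t
      · exact ⟨0, fun w => by rw [ht w, zero_mul]⟩
      by_cases hQ : ∃ μ : K, ∀ w, S.f w t = μ * S.f w y
      · exact hQ
      · push_neg at hQ
        obtain ⟨μ, hμ⟩ := hcon t ht hQ
        have hμ0 : μ ≠ 0 := by
          intro h0
          apply hy
          intro w; rw [hμ w, h0, zero_mul]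
        exact ⟨μ⁻¹, fun w => by rw [hμ w]; field_simp⟩
    by_cases hyy : S.f y y = 0
    · apply hy
      intro z
      obtain ⟨μ, hμ⟩ := hall z
      have := hμ y
      rw [hyy, mul_zero] at this
      rw [S.fsymm]; exact this
    · have h2 : (2 : K) ≠ 0 := by
        intro h2
        rw [S.fself, h2, zero_mul] at hyy; exact hyy rfl
      have hinj : ∀ x, S.f x y = 0 → x = 0 := by
        intro x hx
        obtain ⟨μ, hμ⟩ := hall x
        have hy1 := hμ y
        rw [S.fsymm y x, hx] at hy1
        have hμ0 : μ = 0 := by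
          rcases mul_eq_zero.mp hy1.symm with h | h
          · exact h
          · exact absurd h hyy
        have hxR : S.InR x := fun w => by rw [hμ w, hμ0, zero_mul]
        have hfxx := hxR x
        rw [S.fself] at hfxx
        have hqx : S.q x = 0 := by
          rcases mul_eq_zero.mp hfxx with h | h
          · exact absurd h h2
          · exact h
        exact (S.haniso x).mp hqx
      obtain ⟨x, hx0, hx1, _⟩ := h3 (S.fL y) (S.fL y)
      rw [S.fL_apply] at hx1
      exact hx0 (hinj x hx1)
  -- a fixed non-radical vector
  obtain ⟨u, v, huv⟩ := hproper
  have hvR : ¬ S.InR v := fun h => huv (h u)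
  obtain ⟨c, hc⟩ := step6 v hvR
  -- the eigenvalue is constant
  have hconst : ∀ y, ¬ S.InR y → S.InR (W y - c • y) := by
    intro y hy
    obtain ⟨cy, hcy⟩ := step6 y hy
    suffices h : cy = c by rw [← h]; exact hcy
    -- case analysis on semi-independence of y and v
    by_cases hd1 : ∃ w, S.f w y = 0 ∧ S.f w v ≠ 0
    · by_cases hd2 : ∃ w', S.f w' v = 0 ∧ S.f w' y ≠ 0
      · exact pair y v cy c hy hvR hcy hc hd1 hd2
      · -- ker φ_v ⊆ ker φ_y : proportional, contradicting hd1
        push_neg at hd2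
        obtain ⟨μ, hμ⟩ := L2 v y hvR hd2
        obtain ⟨w, hwy, hwv⟩ := hd1
        have hμ0 : μ ≠ 0 := by
          intro h0
          apply hy; intro z; rw [hμ z, h0, zero_mul]
        have := hμ w
        rw [hwy] at this
        exact absurd (by
          rcases mul_eq_zero.mp this.symm with h | h
          · exact absurd h hμ0
          · exact h) hwv
    · -- ker φ_y ⊆ ker φ_v : φ_v = μ φ_y with μ ≠ 0
      push_neg at hd1
      obtain ⟨μ, hμ⟩ := L2 y v hy hd1
      have hμ0 : μ ≠ 0 := by
        intro h0
        apply hvR; intro z; rw [hμ z, h0, zero_mul]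
      -- get a transversal t
      obtain ⟨t, htR, ht1, ht2⟩ := existsT y hy
      obtain ⟨ct, hct⟩ := step6 t htR
      -- y and t are semi-independent both ways
      have hyt1 : ∃ w, S.f w y = 0 ∧ S.f w t ≠ 0 := by
        by_contra h; push_neg at h
        exact ht1 (L2 y t hy h)
      have hyt2 : ∃ w', S.f w' t = 0 ∧ S.f w' y ≠ 0 := by
        by_contra h; push_neg at h
        exact ht2 (L2 t y htR h)
      have e1 : cy = ct := pair y t cy ct hy htR hcy hct hyt1 hyt2
      -- t and v are semi-independent both ways (since φ_v ∥ φ_y)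
      have htv1 : ∃ w, S.f w t = 0 ∧ S.f w v ≠ 0 := by
        obtain ⟨w', hw't, hw'y⟩ := hyt2
        exact ⟨w', hw't, by rw [hμ w']; exact mul_ne_zero hμ0 hw'y⟩
      have htv2 : ∃ w', S.f w' v = 0 ∧ S.f w' t ≠ 0 := by
        obtain ⟨w, hwy, hwt⟩ := hyt1
        exact ⟨w, by rw [hμ w, hwy, mul_zero], hwt⟩
      have e2 : ct = c := pair t v ct c htR hvR hct hc htv1 htv2
      rw [e1, e2]
  -- the deviation lands in the radical
  have hρ : ∀ y, S.InR (W y - c • y) := by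
    intro y
    by_cases hy : S.InR y
    · exact S.InR_sub (hWrad y hy) (S.InR_smul c hy)
    · exact hconst y hy
  have hπ : ∀ x, S.InR (ω x - c • x) := by
    intro x
    have h1 : ω x = S.σ (W (S.σ x)) := by rw [hW, S.σσ, S.σσ]
    have h2 := hρ (S.σ x)
    have h3 : ω x - c • x = S.σ (W (S.σ x) - c • S.σ x) := by
      rw [S.σsub, S.σsmul, S.σσ, ← h1]
    rw [h3, S.σ_of_InR h2]
    exact S.InR_neg h2
  refine ⟨c, fun x => ?_⟩
  by_cases h2 : (2 : K) = 0
  · -- characteristic 2 : show the radical-valued deviation π vanishes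
    obtain ⟨π, hπdef⟩ : ∃ π : V → V, ∀ x, π x = ω x - c • x := ⟨_, fun _ => rfl⟩
    have hπadd : ∀ x y, π (x + y) = π x + π y := by
      intro x y; rw [hπdef, hπdef, hπdef, hωadd]; module
    have hπR : ∀ x, S.InR (π x) := fun x => by rw [hπdef]; exact hπ x
    have hπU : ∀ b x, π (S.U b x) = S.q b • π x := by
      intro b x
      have hcm : π (S.U b x) = S.U b (π x) := by
        rw [hπdef, hπdef, hcomm]
        have : S.U b (ω x - c • x) = S.U b (ω x) - c • S.U b x := by
          rw [sub_eq_add_neg, S.U_add, ← neg_one_smul K (c • x), S.U_smul, S.U_smul]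
          module
        rw [this]
      rw [hcm, S.U_def, S.σ_of_InR (hπR x),
        show S.f b (-(π x)) = - S.f b (π x) from S.fnegr b (π x),
        show S.f b (π x) = 0 from hπR x b]
      module
    -- linearized commuting identity
    have hπcross : ∀ b b' x,
        π (S.f b (S.σ x) • b' + S.f b' (S.σ x) • b - S.f b b' • S.σ x)
          = S.f b b' • π x := by
      intro b b' x
      have hUexp : S.U (b + b') x = S.U b x + S.U b' x +
          (S.f b (S.σ x) • b' + S.f b' (S.σ x) • b - S.f b b' • S.σ x) := by
        rw [S.U_def, S.U_def, S.U_def, S.faddl, S.qadd]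
        module
      have h := hπU (b + b') x
      rw [hUexp, hπadd, hπadd, hπU, hπU, S.qadd] at h
      linear_combination (norm := module) h
    -- vanishing off the radical
    have hvanish : ∀ x, π x ≠ 0 → S.InR x := by
      intro x hx
      have key : ∀ b, S.f b (S.σ x) = 0 := by
        intro b
        have h := hπcross b (S.σ x) x
        have hzz : S.f (S.σ x) (S.σ x) = 0 := by rw [S.fself, h2, zero_mul]
        have hzero : S.f b (S.σ x) • S.σ x + S.f (S.σ x) (S.σ x) • b
            - S.f b (S.σ x) • S.σ x = S.f (S.σ x) (S.σ x) • b := by module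
        rw [hzero, hzz, zero_smul] at h
        -- h : π 0 = f b (σ x) • π x
        have hπ0 : π 0 = 0 := by
          have := hπadd 0 0; rw [add_zero] at this
          have h2' : π 0 + π 0 = π 0 + 0 := by rw [add_zero]; exact this.symm
          exact add_left_cancel h2'
        rw [hπ0] at h
        rcases smul_eq_zero.mp h.symm with h | h
        · exact h
        · exact absurd h hx
      -- so σ x is radical, hence so is x
      have hTx : S.T x = 0 := by
        have := key S.ε
        rw [show S.f S.ε (S.σ x) = S.T (S.σ x) from rfl, S.Tσ] at this
        exact this
      have hσx : S.σ x = -x := by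
        unfold QS.σ; rw [hTx, zero_smul, zero_sub]
      intro z
      have := key z
      rw [hσx, S.fnegr] at this
      have := neg_eq_zero.mp this
      exact this
    -- conclude π = 0 everywhere
    have hπzero : ∀ x, π x = 0 := by
      intro x
      by_contra hx
      have hxR := hvanish x hx
      have hvx : ¬ S.InR (x + v) := by
        intro h
        have := h u
        rw [S.faddr, hxR u, zero_add] at this
        exact huv this
      have hπv : π v = 0 := by
        by_contra h; exact hvR (hvanish v h)
      have hπxv : π (x + v) = 0 := by
        by_contra h; exact hvx (hvanish (x + v) h)
      have := hπadd x v
      rw [hπxv, hπv, add_zero] at this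
      exact hx this.symm
    have := hπzero x
    rw [hπdef] at this
    exact sub_eq_zero.mp this
  · -- characteristic ≠ 2 : the radical is trivial
    have h := hπ x
    have hself := h (ω x - c • x)
    rw [S.fself] at hself
    have hq : S.q (ω x - c • x) = 0 := by
      rcases mul_eq_zero.mp hself with h' | h'
      · exact absurd h' h2
      · exact h'
    exact sub_eq_zero.mp ((S.haniso _).mp hq)


end QS
namespace QS
variable {K V : Type*} [Field K] [AddCommGroup V] [Module K V] (S : QS K V)

lemma exists_not_smul
    (h3 : ∀ φ ψ : V →ₗ[K] K, ∃ x : V, x ≠ 0 ∧ φ x = 0 ∧ ψ x = 0)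
    (y z : V) (hz : z ≠ 0) : ∃ b₁, S.f b₁ y = 0 ∧ ∀ μ : K, b₁ ≠ μ • z := by
  obtain ⟨δ, hδ⟩ : ∃ δ : Module.Dual K V, δ z ≠ 0 := by
    by_contra h; push_neg at h
    exact hz ((Module.forall_dual_apply_eq_zero_iff K z).mp h)
  obtain ⟨x, hx0, hx1, hx2⟩ := h3 (S.fL y) δ
  refine ⟨x, by simpa using hx1, fun μ hμ => ?_⟩
  rcases eq_or_ne μ 0 with h0 | h0
  · rw [h0, zero_smul] at hμ; exact hx0 hμ
  · rw [hμ, map_smul, smul_eq_mul] at hx2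
    exact h0 (by rcases mul_eq_zero.mp hx2 with h | h; exact h; exact absurd h hδ)

/-- If every Hua map is a scalar multiple of the identity, the polar form vanishes. -/
lemma scalarU
    (h3 : ∀ φ ψ : V →ₗ[K] K, ∃ x : V, x ≠ 0 ∧ φ x = 0 ∧ ψ x = 0)
    (hsc : ∀ b : V, ∃ μ : K, ∀ x, S.U b x = μ • x) :
    ∀ u v : V, S.f u v = 0 := by
  obtain ⟨u₁, _, hu₁⟩ := S.exists_not_smul h3 S.ε S.ε S.εne
  have hT1 : ∀ b, (∀ μ : K, b ≠ μ • S.ε) → S.T b = 0 := by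
    intro b hb
    obtain ⟨μ, hμ⟩ := hsc b
    have h := hμ S.ε
    rw [S.U_def, S.σε, S.fεx] at h
    by_contra hT
    refine hb ((μ + S.q b) / S.T b) ?_
    have h2 : S.T b • b = (μ + S.q b) • S.ε := by linear_combination (norm := module) h
    exact smul_solve hT h2
  have hTε : S.T S.ε = 0 := by
    have h1 : ∀ μ : K, S.ε + u₁ ≠ μ • S.ε := by
      intro μ h
      refine hu₁ (μ - 1) ?_
      rw [sub_smul, one_smul]
      linear_combination (norm := module) h
    have e1 := hT1 u₁ hu₁
    have e2 := hT1 (S.ε + u₁) h1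
    rw [S.Tadd, e1, add_zero] at e2; exact e2
  have h2 : (2 : K) = 0 := by rw [← S.Tε]; exact hTε
  have hT : ∀ z, S.T z = 0 := by
    intro z
    by_cases hz : ∀ μ : K, z ≠ μ • S.ε
    · exact hT1 z hz
    · push_neg at hz; obtain ⟨μ, rfl⟩ := hz
      rw [S.Tsmul, hTε, mul_zero]
  have hσ : ∀ z, S.σ z = -z := by
    intro z; unfold QS.σ; rw [hT, zero_smul, zero_sub]
  intro a x
  obtain ⟨μ, hμ⟩ := hsc a
  have key : S.f a x • a = (S.q a - μ) • x := by
    have h := hμ x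
    rw [S.U_def, hσ, S.fnegr] at h
    linear_combination (norm := module) -h
  by_cases ha : a = 0
  · rw [ha]; exact S.fzero_l x
  by_cases hx : ∀ ν : K, x ≠ ν • a
  · by_contra hfa
    have hne : S.q a - μ ≠ 0 := by
      intro h0; rw [h0, zero_smul] at key
      rcases smul_eq_zero.mp key with h' | h'
      · exact hfa h'
      · exact ha h'
    exact hx _ (smul_solve hne key.symm)
  · push_neg at hx; obtain ⟨ν, rfl⟩ := hx
    rw [S.fsmulr, S.fself, h2]; ring

end QS

/-- A Jordan isomorphism between a Moufang set of quadratic form type and a Moufang set of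
proper quadratic form type of dimension at least `3` is induced by an isomorphism of the
quadratic spaces. -/
theorem jordan_iso_quadratic_quadratic {K V K' V' : Type*} [Field K] [AddCommGroup V]
    [Module K V] [Field K'] [AddCommGroup V'] [Module K' V']
    (q : V → K)
    (hqsmul : ∀ (s : K) (x : V), q (s • x) = s ^ 2 * q x)
    (hpaddl : ∀ x x' y : V, polarForm q (x + x') y = polarForm q x y + polarForm q x' y)
    (hpsmull : ∀ (s : K) (x y : V), polarForm q (s • x) y = s * polarForm q x y)
    (hpaddr : ∀ x y y' : V, polarForm q x (y + y') = polarForm q x y + polarForm q x y')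
    (hpsmulr : ∀ (s : K) (x y : V), polarForm q x (s • y) = s * polarForm q x y)
    (haniso : ∀ x : V, q x = 0 ↔ x = 0)
    (ε : V) (hε : q ε = 1)
    (q' : V' → K')
    (hqsmul' : ∀ (s : K') (x : V'), q' (s • x) = s ^ 2 * q' x)
    (hpaddl' : ∀ x x' y : V', polarForm q' (x + x') y = polarForm q' x y + polarForm q' x' y)
    (hpsmull' : ∀ (s : K') (x y : V'), polarForm q' (s • x) y = s * polarForm q' x y)
    (hpaddr' : ∀ x y y' : V', polarForm q' x (y + y') = polarForm q' x y + polarForm q' x y')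
    (hpsmulr' : ∀ (s : K') (x y : V'), polarForm q' x (s • y) = s * polarForm q' x y)
    (haniso' : ∀ x : V', q' x = 0 ↔ x = 0)
    (ε' : V') (hε' : q' ε' = 1)
    (hproper' : ∃ x y : V', polarForm q' x y ≠ 0)
    (hrank' : 3 ≤ Module.rank K' V')
    (γ : V → V') (hbij : Function.Bijective γ)
    (hadd : ∀ x y : V, γ (x + y) = γ x + γ y)
    (hγε : γ ε = ε')
    (hhua : ∀ a : V, a ≠ 0 → ∀ x : V, γ (huaMap q ε a x) = huaMap q' ε' (γ a) (γ x)) :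
    ∃ φ : K ≃+* K', (∀ (s : K) (x : V), γ (s • x) = φ s • γ x) ∧
      ∀ x : V, q' (γ x) = φ (q x) := by
  classical
  let S : QS K V := ⟨q, ε, hqsmul, hpaddl, hpsmull, hpaddr, hpsmulr, haniso, hε⟩
  let S' : QS K' V' := ⟨q', ε', hqsmul', hpaddl', hpsmull', hpaddr', hpsmulr', haniso', hε'⟩
  -- basic additive facts for γ
  have hγ0 : γ 0 = 0 := by
    have h := hadd 0 0; rw [add_zero] at h
    have h2 : γ 0 + γ 0 = γ 0 + 0 := by rw [add_zero]; exact h.symm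
    exact add_left_cancel h2
  have hγneg : ∀ x, γ (-x) = - γ x := by
    intro x
    have h := hadd x (-x); rw [add_neg_cancel, hγ0] at h
    exact (neg_eq_of_add_eq_zero_right h.symm).symm
  have hγsub : ∀ x y, γ (x - y) = γ x - γ y := by
    intro x y; rw [sub_eq_add_neg, hadd, hγneg, sub_eq_add_neg]
  -- the Hua relation for all a
  have hhua' : ∀ a x, γ (S.U a x) = S'.U (γ a) (γ x) := by
    intro a x
    by_cases ha : a = 0
    · rw [ha, hγ0, S.U_zero_left, S'.U_zero_left, hγ0]
    · exact hhua a ha x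
  -- the inverse of γ
  let e : V ≃ V' := Equiv.ofBijective γ hbij
  have hgi1 : ∀ x', γ (e.symm x') = x' := fun x' => e.apply_symm_apply x'
  have hgi2 : ∀ x, e.symm (γ x) = x := fun x => e.symm_apply_apply x
  have hsymadd : ∀ a b : V', e.symm (a + b) = e.symm a + e.symm b := by
    intro a b
    apply hbij.1
    rw [hadd, hgi1, hgi1, hgi1]
  -- dimension hypothesis for V'
  have h3' : ∀ φ ψ : V' →ₗ[K'] K', ∃ x : V', x ≠ 0 ∧ φ x = 0 ∧ ψ x = 0 := by
    intro φ ψ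
    by_contra h; push_neg at h
    have hinj : Function.Injective (φ.prod ψ) := by
      rw [← LinearMap.ker_eq_bot, LinearMap.ker_eq_bot']
      intro x hx
      by_contra hx0
      rw [LinearMap.prod_apply] at hx
      have h1 : φ x = 0 := congrArg Prod.fst hx
      have h2 : ψ x = 0 := congrArg Prod.snd hx
      exact h x hx0 h1 h2
    have hr := LinearMap.lift_rank_le_of_injective (φ.prod ψ) hinj
    have h2 : Module.rank K' (K' × K') = 2 := by
      rw [rank_prod', Module.rank_self]; norm_num
    rw [h2] at hr
    have h4 := (Cardinal.lift_le.mpr hrank').trans hr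
    simp only [Cardinal.lift_ofNat] at h4
    norm_num at h4
  have hproper'S : ∃ u v : V', S'.f u v ≠ 0 := hproper'
  -- semilinearity scalar for each s
  have hsemi : ∀ s : K, ∃ c : K', ∀ x, γ (s • x) = c • γ x := by
    intro s
    obtain ⟨c, hc⟩ := S'.centroid hproper'S h3' (fun x' => γ (s • e.symm x'))
      (by intro x y
          show γ (s • e.symm (x + y)) = γ (s • e.symm x) + γ (s • e.symm y)
          rw [hsymadd, smul_add, hadd])
      (by
        intro b x'
        have h1 : e.symm (S'.U b x') = S.U (e.symm b) (e.symm x') := by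
          apply hbij.1
          rw [hgi1, hhua' (e.symm b) (e.symm x'), hgi1, hgi1]
        show γ (s • e.symm (S'.U b x')) = S'.U b (γ (s • e.symm x'))
        rw [h1, ← S.U_smul]
        have h2 := hhua' (e.symm b) (s • e.symm x')
        rw [hgi1] at h2
        exact h2)
    exact ⟨c, fun x => by have h := hc (γ x); rwa [hgi2] at h⟩
  let φ₀ : K → K' := fun s => Classical.choose (hsemi s)
  have hφ₀ : ∀ (s : K) (x : V), γ (s • x) = φ₀ s • γ x :=
    fun s => Classical.choose_spec (hsemi s)
  have hγε' : γ S.ε = S'.ε := hγε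
  have hsu : ∀ c c' : K', c • S'.ε = c' • S'.ε → c = c' := by
    intro c c' h
    have h2 : (c - c') • S'.ε = 0 := by rw [sub_smul, h, sub_self]
    rcases smul_eq_zero.mp h2 with h' | h'
    · exact sub_eq_zero.mp h'
    · exact absurd h' S'.εne
  -- ring homomorphism structure
  have hmap_one : φ₀ 1 = 1 := by
    apply hsu
    rw [← hγε', ← hφ₀ 1 S.ε, one_smul, one_smul]
  have hmap_zero : φ₀ 0 = 0 := by
    apply hsu
    rw [← hγε', ← hφ₀ 0 S.ε, zero_smul, zero_smul, hγ0]
  have hmap_add : ∀ s t, φ₀ (s + t) = φ₀ s + φ₀ t := by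
    intro s t
    apply hsu
    rw [← hγε', ← hφ₀ (s + t) S.ε, add_smul, hadd, hφ₀, hφ₀, add_smul]
  have hmap_mul : ∀ s t, φ₀ (s * t) = φ₀ s * φ₀ t := by
    intro s t
    apply hsu
    rw [← hγε', ← hφ₀ (s * t) S.ε, mul_smul, hφ₀, hφ₀, mul_smul]
  let φR : K →+* K' :=
    { toFun := φ₀, map_one' := hmap_one, map_mul' := hmap_mul,
      map_zero' := hmap_zero, map_add' := hmap_add }
  have hφinj : Function.Injective φ₀ := φR.injective
  -- the polar form on V is not identically zero
  have hproperS : ∃ u v : V, S.f u v ≠ 0 := by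
    by_contra h; push_neg at h
    have hsc : ∀ b : V', ∃ μ : K', ∀ x', S'.U b x' = μ • x' := by
      intro b
      refine ⟨φ₀ (S.q (e.symm b)), fun x' => ?_⟩
      have hσ : S.σ (e.symm x') = - e.symm x' := by
        unfold QS.σ QS.T
        rw [show S.f S.ε (e.symm x') = 0 from h S.ε _, zero_smul, zero_sub]
      have hU : S.U (e.symm b) (e.symm x') = S.q (e.symm b) • e.symm x' := by
        rw [S.U_def, hσ, S.fnegr, show S.f (e.symm b) (e.symm x') = 0 from h _ _]
        module
      have h5 := hhua' (e.symm b) (e.symm x')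
      rw [hU, hgi1, hgi1] at h5
      rw [← h5, hφ₀, hgi1]
    obtain ⟨u', v', huv'⟩ := hproper'
    exact huv' (S'.scalarU h3' hsc u' v')
  -- dimension hypothesis for V
  have h3V : ∀ φ ψ : V →ₗ[K] K, ∃ x : V, x ≠ 0 ∧ φ x = 0 ∧ ψ x = 0 := by
    intro φ ψ
    by_contra h; push_neg at h
    have hinj : Function.Injective (φ.prod ψ) := by
      rw [← LinearMap.ker_eq_bot, LinearMap.ker_eq_bot']
      intro x hx
      by_contra hx0
      rw [LinearMap.prod_apply] at hx
      exact h x hx0 (congrArg Prod.fst hx) (congrArg Prod.snd hx)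
    obtain ⟨sset, hcard, hind⟩ := le_rank_iff_exists_linearIndependent.mp hrank'
    -- transport linear independence through γ⁻¹
    have hindV : LinearIndependent K (fun i : sset => e.symm (i : V')) := by
      rw [linearIndependent_iff']
      intro t g hsum i hi
      let Γ : V →+ V' := AddMonoidHom.mk' γ hadd
      have hγsum : γ (∑ j ∈ t, g j • e.symm (j : V')) =
          ∑ j ∈ t, φ₀ (g j) • (j : V') := by
        show Γ (∑ j ∈ t, g j • e.symm (j : V')) = _
        rw [map_sum]
        refine Finset.sum_congr rfl fun j _ => ?_
        show γ (g j • e.symm (j : V')) = _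
        rw [hφ₀, hgi1]
      rw [hsum, hγ0] at hγsum
      have hres : φ₀ (g i) = 0 :=
        linearIndependent_iff'.mp hind t (fun j => φ₀ (g j)) hγsum.symm i hi
      exact hφinj (by rw [hres, hmap_zero])
    have hind2 := hindV.map' (φ.prod ψ) (LinearMap.ker_eq_bot.mpr hinj)
    have hcle := hind2.cardinal_lift_le_rank
    have h2 : Module.rank K (K × K) = 2 := by
      rw [rank_prod', Module.rank_self]; norm_num
    rw [h2, hcard] at hcle
    simp only [Cardinal.lift_ofNat] at hcle
    norm_num at hcle
  -- surjectivity of φ₀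
  have hsurj : Function.Surjective φ₀ := by
    intro c
    obtain ⟨d, hd⟩ := S.centroid hproperS h3V (fun x => e.symm (c • γ x))
      (by intro x y
          show e.symm (c • γ (x + y)) = e.symm (c • γ x) + e.symm (c • γ y)
          rw [hadd, smul_add, hsymadd])
      (by
        intro b x
        show e.symm (c • γ (S.U b x)) = S.U b (e.symm (c • γ x))
        rw [hhua' b x, ← S'.U_smul]
        have h1 := hhua' b (e.symm (c • γ x))
        rw [hgi1] at h1
        rw [← h1, hgi2])
    refine ⟨d, ?_⟩
    have h1 := hd S.ε
    apply hsu
    rw [← hγε', ← hφ₀ d S.ε, ← h1, hgi1]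
  refine ⟨RingEquiv.ofBijective φR ⟨φR.injective, hsurj⟩, fun s x => hφ₀ s x, fun x => ?_⟩
  show S'.q (γ x) = φ₀ (S.q x)
  by_cases hline : ∃ μ : K', γ x = μ • S'.ε
  · obtain ⟨μ, hμ⟩ := hline
    obtain ⟨s, rfl⟩ := hsurj μ
    have hx : x = s • S.ε := by
      apply hbij.1
      rw [hμ, hφ₀, hγε']
    rw [hx, hφ₀, hγε', S'.hqsmul, S.hqsmul, S'.hε, S.hε, mul_one, mul_one,
      show φ₀ (s ^ 2) = φ₀ s ^ 2 from by rw [sq, sq, hmap_mul]]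
  · push_neg at hline
    have hx0 : x ≠ 0 := by
      intro h; rw [h, hγ0] at hline
      exact hline 0 (by rw [zero_smul])
    have h := hhua x hx0 ε
    rw [hγε] at h
    have hUx : S.U x S.ε = S.f x S.ε • x - S.q x • S.ε := by rw [S.U_def, S.σε]
    have hUx' : S'.U (γ x) S'.ε = S'.f (γ x) S'.ε • γ x - S'.q (γ x) • S'.ε := by
      rw [S'.U_def, S'.σε]
    have hL : γ (S.U x S.ε) = φ₀ (S.f x S.ε) • γ x - φ₀ (S.q x) • S'.ε := by
      rw [hUx, hγsub, hφ₀, hφ₀, hγε']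
    have heq : φ₀ (S.f x S.ε) • γ x - φ₀ (S.q x) • S'.ε
        = S'.f (γ x) S'.ε • γ x - S'.q (γ x) • S'.ε := by
      rw [← hL, ← hUx']
      exact h
    have heq2 : (φ₀ (S.f x S.ε) - S'.f (γ x) S'.ε) • γ x
        = (φ₀ (S.q x) - S'.q (γ x)) • S'.ε := by
      linear_combination (norm := module) heq
    by_cases hco : φ₀ (S.f x S.ε) - S'.f (γ x) S'.ε = 0
    · rw [hco, zero_smul] at heq2
      rcases smul_eq_zero.mp heq2.symm with h' | h'
      · exact (sub_eq_zero.mp h').symm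
      · exact absurd h' S'.εne
    · exact absurd (QS.smul_solve hco heq2) (hline _)
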